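/- In BS(p,q) = ⟨a,t | t a^p t⁻¹ = a^q⟩ with 1 ≤ p < q, for every integer N > 0 the element a^N has word length at most (q+1)·log_{q/p} N + q with respect to the generators {a^{±1}, t^{±1}}. -/
import Mathlib


def bsRel (p q : ℕ) : Set (FreeGroup Bool) :=
  {FreeGroup.of true * FreeGroup.of false ^ p * (FreeGroup.of true)⁻¹ * (FreeGroup.of false ^ q)⁻¹}

/-- The Baumslag–Solitar group BS(p,q) = ⟨a,t | t a^p t⁻¹ = a^q⟩. -/
abbrev BS (p q : ℕ) : Type := PresentedGroup (bsRel p q)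

def BS.a (p q : ℕ) : BS p q := PresentedGroup.of false
def BS.t (p q : ℕ) : BS p q := PresentedGroup.of true

/-- The symmetric generating set {a, a⁻¹, t, t⁻¹}. -/
def genSet (p q : ℕ) : Set (BS p q) := {BS.a p q, (BS.a p q)⁻¹, BS.t p q, (BS.t p q)⁻¹}

/-- Word length with respect to {a^{±1}, t^{±1}}. -/
noncomputable def wlen (p q : ℕ) (x : BS p q) : ℕ :=
  sInf {n | ∃ l : List (BS p q), l.length = n ∧ (∀ g ∈ l, g ∈ genSet p q) ∧ l.prod = x}

/-- The syllable a^j t^{±1} : `(j, true)` ↦ a^j t, `(j, false)` ↦ a^j t⁻¹. -/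
def syl (p q : ℕ) (s : ℕ × Bool) : BS p q :=
  BS.a p q ^ s.1 * if s.2 then BS.t p q else (BS.t p q)⁻¹



section Helpers

variable {p q : ℕ}

lemma bs_rel (p q : ℕ) : BS.t p q * BS.a p q ^ p * (BS.t p q)⁻¹ = BS.a p q ^ q := by
  have h : PresentedGroup.mk (bsRel p q)
      (FreeGroup.of true * FreeGroup.of false ^ p * (FreeGroup.of true)⁻¹ *
        (FreeGroup.of false ^ q)⁻¹) = 1 := by
    show (QuotientGroup.mk _ : BS p q) = 1
    rw [QuotientGroup.eq_one_iff]
    exact Subgroup.subset_normalClosure (by simp [bsRel])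
  simp only [map_mul, map_pow, map_inv] at h
  have h' : BS.t p q * BS.a p q ^ p * (BS.t p q)⁻¹ * (BS.a p q ^ q)⁻¹ = 1 := h
  exact mul_inv_eq_one.mp h'

lemma wlen_le {x : BS p q} {l : List (BS p q)} (hl : ∀ g ∈ l, g ∈ genSet p q)
    (hx : l.prod = x) : wlen p q x ≤ l.length :=
  Nat.sInf_le ⟨l, rfl, hl, hx⟩

lemma a_mem : BS.a p q ∈ genSet p q := by simp [genSet]
lemma t_mem : BS.t p q ∈ genSet p q := by simp [genSet]
lemma tinv_mem : (BS.t p q)⁻¹ ∈ genSet p q := by simp [genSet]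

lemma wlen_pow_a_le (k : ℕ) : wlen p q (BS.a p q ^ k) ≤ k := by
  have := wlen_le (l := List.replicate k (BS.a p q)) (x := BS.a p q ^ k)
    (fun g hg => by
      rw [List.eq_of_mem_replicate hg]; exact a_mem)
    (by simp [List.prod_replicate])
  simpa using this

lemma wlen_witness (k : ℕ) :
    ∃ l : List (BS p q), l.length = wlen p q (BS.a p q ^ k) ∧
      (∀ g ∈ l, g ∈ genSet p q) ∧ l.prod = BS.a p q ^ k := by
  have hne : {n | ∃ l : List (BS p q), l.length = n ∧ (∀ g ∈ l, g ∈ genSet p q) ∧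
      l.prod = BS.a p q ^ k}.Nonempty :=
    ⟨k, List.replicate k (BS.a p q), by simp,
      fun g hg => by rw [List.eq_of_mem_replicate hg]; exact a_mem,
      by simp [List.prod_replicate]⟩
  exact Nat.sInf_mem hne

lemma key_step (hm : 0 < q) (m r : ℕ) (hr : r < q) :
    wlen p q (BS.a p q ^ (q * m + r)) ≤ r + wlen p q (BS.a p q ^ (p * m)) + 2 := by
  obtain ⟨l, hlen, hmem, hprod⟩ := wlen_witness (p := p) (q := q) (p * m)
  have hprodall : (List.replicate r (BS.a p q) ++ [BS.t p q] ++ l ++ [(BS.t p q)⁻¹]).prod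
      = BS.a p q ^ (q * m + r) := by
    have hrel : (BS.a p q ^ q) ^ m = BS.t p q * BS.a p q ^ (p * m) * (BS.t p q)⁻¹ := by
      rw [← bs_rel p q, conj_pow, ← pow_mul]
    have : BS.a p q ^ (q * m + r) = BS.a p q ^ r * (BS.t p q * BS.a p q ^ (p * m) * (BS.t p q)⁻¹) := by
      rw [← hrel, ← pow_mul, ← pow_add, Nat.add_comm (q * m) r]
    rw [this]
    simp [List.prod_append, List.prod_replicate, hprod, mul_assoc]
  have := wlen_le (x := BS.a p q ^ (q * m + r))
    (l := List.replicate r (BS.a p q) ++ [BS.t p q] ++ l ++ [(BS.t p q)⁻¹])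
    (by
      intro g hg
      simp only [List.mem_append, List.mem_singleton] at hg
      rcases hg with ((hg | hg) | hg) | hg
      · rw [List.eq_of_mem_replicate hg]; exact a_mem
      · rw [hg]; exact t_mem
      · exact hmem g hg
      · rw [hg]; exact tinv_mem)
    hprodall
  simp only [List.length_append, List.length_replicate, List.length_singleton, hlen] at this
  omega

end Helpers

/-- In BS(p,q) with 1 ≤ p < q, for every integer N > 0 the element a^N has word
length at most (q+1)·log_{q/p} N + q. -/
theorem stmt12 (p q : ℕ) (hp : 1 ≤ p) (hpq : p < q) (N : ℕ) (hN : 0 < N) :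
    (wlen p q (BS.a p q ^ N) : ℝ) ≤
      ((q : ℝ) + 1) * Real.logb ((q : ℝ) / p) N + q := by
  have hq0 : (0:ℕ) < q := lt_of_le_of_lt (Nat.zero_le p) hpq
  have hp0 : (0:ℝ) < p := by exact_mod_cast hp
  have hb : 1 < (q:ℝ) / p := by
    rw [lt_div_iff₀ hp0]
    simpa using (by exact_mod_cast hpq : (p:ℝ) < q)
  induction N using Nat.strong_induction_on with
  | _ N ih =>
  have hN1 : (1:ℝ) ≤ (N:ℝ) := by exact_mod_cast hN
  have hlogN : 0 ≤ Real.logb ((q:ℝ)/p) N := Real.logb_nonneg hb hN1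
  by_cases hcase : N < q
  · have h1 : (wlen p q (BS.a p q ^ N) : ℝ) ≤ N := by
      exact_mod_cast wlen_pow_a_le (p := p) (q := q) N
    have h2 : (N:ℝ) ≤ q := by exact_mod_cast hcase.le
    nlinarith [mul_nonneg (by positivity : (0:ℝ) ≤ (q:ℝ)+1) hlogN]
  · push_neg at hcase
    set m := N / q with hm
    set r := N % q with hrdef
    have hNeq : q * m + r = N := Nat.div_add_mod N q
    have hr : r < q := Nat.mod_lt _ hq0
    have hm1 : 1 ≤ m := Nat.one_le_div_iff hq0 |>.mpr hcase
    have hpm_pos : 0 < p * m := Nat.mul_pos hp hm1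
    have hpm_lt : p * m < N := by
      calc p * m < q * m := by
            exact (Nat.mul_lt_mul_right hm1).mpr hpq
        _ ≤ N := by omega
    have hIH := ih (p * m) hpm_lt hpm_pos
    have hstep : (wlen p q (BS.a p q ^ N) : ℝ) ≤
        (r : ℝ) + wlen p q (BS.a p q ^ (p * m)) + 2 := by
      have := key_step (p := p) (q := q) hq0 m r hr
      rw [hNeq] at this
      exact_mod_cast this
    -- logb gap: logb b (p*m) + 1 ≤ logb b N
    have hpm_posR : (0:ℝ) < (p*m : ℕ) := by exact_mod_cast hpm_pos
    have hgap : Real.logb ((q:ℝ)/p) ((p*m : ℕ) : ℝ) + 1 ≤ Real.logb ((q:ℝ)/p) N := by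
      have hle : ((q:ℝ)/p) * ((p*m : ℕ) : ℝ) ≤ (N:ℝ) := by
        push_cast
        rw [div_mul_eq_mul_div, mul_comm ((p:ℝ)) ((m:ℝ)), ← mul_assoc, mul_comm ((q:ℝ)) ((m:ℝ))]
        rw [mul_div_assoc, div_self hp0.ne', mul_one, mul_comm]
        exact_mod_cast (by omega : q * m ≤ N)
      have := Real.logb_le_logb_of_le hb (by positivity) hle
      rwa [Real.logb_mul (by positivity) (by positivity),
        Real.logb_self_eq_one hb, add_comm] at this
    have hrq : (r:ℝ) + 1 ≤ (q:ℝ) := by exact_mod_cast hr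
    nlinarith [hIH, hgap, hrq,
      mul_le_mul_of_nonneg_left hgap (by positivity : (0:ℝ) ≤ (q:ℝ)+1)]
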